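/- arXiv:2507.20167 — 2 statements merged into one kernel-verified Lean document; each statement's English description precedes it below -/
import Mathlib

section
/- For all integers a ≥ 1, b ≥ 0, every integer n ≥ 1 and every real x: T^{(a,b)}_{n,λ}(x+1) − T^{(a,b)}_{n,λ}(x) = n·T^{(a−1,b)}_{n−1,λ}(x). -/
open Finset PowerSeries

noncomputable def dff (lam x : ℝ) (n : ℕ) : ℝ := ∏ i ∈ Finset.range n, (x - i * lam)

noncomputable def degExp (lam x : ℝ) : PowerSeries ℝ :=
  PowerSeries.mk fun k => dff lam x k / k.factorial

lemma smeval_descPochhammer_real (n : ℕ) (t : ℝ) :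
    (descPochhammer ℤ n).smeval t = ∏ i ∈ Finset.range n, (t - i) := by
  induction n with
  | zero => simp
  | succ n ih =>
    rw [descPochhammer_succ_right, Polynomial.smeval_mul, ih, Finset.prod_range_succ]
    congr 1
    simp [Polynomial.smeval_sub, Polynomial.smeval_X, Polynomial.smeval_natCast]

lemma dff_eq (lam : ℝ) (hlam : lam ≠ 0) (x : ℝ) (n : ℕ) :
    dff lam x n = lam ^ n * ∏ i ∈ Finset.range n, (x / lam - i) := by
  have h : lam ^ n = ∏ _i ∈ Finset.range n, lam := by simp
  rw [dff, h, ← Finset.prod_mul_distrib]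
  refine Finset.prod_congr rfl fun i _ => ?_
  field_simp

lemma dff_vandermonde (lam : ℝ) (hlam : lam ≠ 0) (x y : ℝ) (n : ℕ) :
    dff lam (x + y) n = ∑ ij ∈ Finset.HasAntidiagonal.antidiagonal n,
      (n.choose ij.1 : ℝ) * dff lam x ij.1 * dff lam y ij.2 := by
  have h := Ring.descPochhammer_smeval_add (R := ℝ) (r := x / lam) (s := y / lam) n (Commute.all _ _)
  rw [dff_eq lam hlam, ← smeval_descPochhammer_real, add_div, h, Finset.mul_sum]
  refine Finset.sum_congr rfl fun ij hij => ?_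
  rw [dff_eq lam hlam x, dff_eq lam hlam y, ← smeval_descPochhammer_real,
    ← smeval_descPochhammer_real]
  have hsum : ij.1 + ij.2 = n := Finset.HasAntidiagonal.mem_antidiagonal.mp hij
  rw [← hsum, pow_add]
  ring

lemma degExp_add (lam : ℝ) (hlam : lam ≠ 0) (x y : ℝ) :
    degExp lam (x + y) = degExp lam x * degExp lam y := by
  ext n
  rw [degExp, coeff_mk, PowerSeries.coeff_mul, dff_vandermonde lam hlam, Finset.sum_div]
  refine Finset.sum_congr rfl fun ij hij => ?_
  have hsum : ij.1 + ij.2 = n := Finset.HasAntidiagonal.mem_antidiagonal.mp hij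
  rw [degExp, degExp, coeff_mk, coeff_mk]
  have hfacn : (ij.1 + ij.2).choose ij.1 * ij.1.factorial * ij.2.factorial
      = (ij.1 + ij.2).factorial := by
    have h0 := Nat.choose_mul_factorial_mul_factorial (Nat.le_add_right ij.1 ij.2)
    rwa [Nat.add_sub_cancel_left] at h0
  have hfac : (n.choose ij.1 : ℝ) * ij.1.factorial * ij.2.factorial = n.factorial := by
    rw [← hsum]; exact_mod_cast hfacn
  have h1 : (ij.1.factorial : ℝ) ≠ 0 := Nat.cast_ne_zero.mpr ij.1.factorial_ne_zero
  have h2 : (ij.2.factorial : ℝ) ≠ 0 := Nat.cast_ne_zero.mpr ij.2.factorial_ne_zero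
  have h3 : (n.factorial : ℝ) ≠ 0 := Nat.cast_ne_zero.mpr n.factorial_ne_zero
  field_simp
  linear_combination dff lam x ij.1 * dff lam y ij.2 * hfac

theorem stmt8 (lam : ℝ) (hlam : lam ≠ 0)
    (T : ℕ → ℕ → ℝ → ℕ → ℝ)
    (hT : ∀ a b x, (PowerSeries.mk fun n => T a b x n / n.factorial)
          * (degExp lam 1 - 1) ^ a * (degExp lam 1 + 1) ^ b
        = (2 : PowerSeries ℝ) ^ b * (PowerSeries.X : PowerSeries ℝ) ^ a * degExp lam x)
    (a b : ℕ) (ha : 1 ≤ a) (n : ℕ) (hn : 1 ≤ n) (x : ℝ) :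
    T a b (x + 1) n - T a b x n = (n : ℝ) * T (a - 1) b x (n - 1) := by
  obtain ⟨c, rfl⟩ : ∃ c, a = c + 1 := ⟨a - 1, (Nat.succ_pred_eq_of_pos ha).symm⟩
  simp only [Nat.add_sub_cancel]
  obtain ⟨m, rfl⟩ : ∃ m, n = m + 1 := ⟨n - 1, (Nat.succ_pred_eq_of_pos hn).symm⟩
  simp only [Nat.add_sub_cancel]
  have hem : degExp lam 1 - 1 ≠ 0 := by
    intro h
    have := congrArg (PowerSeries.coeff 1) h
    simp [degExp, dff] at this
  have hep : degExp lam 1 + 1 ≠ 0 := by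
    intro h
    have := congrArg (PowerSeries.coeff 0) h
    simp [degExp, dff] at this
  have hG : (degExp lam 1 - 1) ^ (c+1) * (degExp lam 1 + 1) ^ b ≠ 0 :=
    mul_ne_zero (pow_ne_zero _ hem) (pow_ne_zero _ hep)
  have h1 := hT (c+1) b (x + 1)
  have h2 := hT (c+1) b x
  have h3 := hT c b x
  rw [degExp_add lam hlam x 1] at h1
  have key : ((PowerSeries.mk fun n => T (c+1) b (x+1) n / n.factorial)
        - (PowerSeries.mk fun n => T (c+1) b x n / n.factorial)
        - PowerSeries.X * (PowerSeries.mk fun n => T c b x n / n.factorial))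
      * ((degExp lam 1 - 1) ^ (c+1) * (degExp lam 1 + 1) ^ b) = 0 := by
    linear_combination h1 - h2 - (PowerSeries.X * (degExp lam 1 - 1)) * h3
  have hmain : (PowerSeries.mk fun n => T (c+1) b (x+1) n / n.factorial)
        - (PowerSeries.mk fun n => T (c+1) b x n / n.factorial)
      = PowerSeries.X * (PowerSeries.mk fun n => T c b x n / n.factorial) := by
    rcases mul_eq_zero.mp key with h | h
    · exact sub_eq_zero.mp (by linear_combination h)
    · exact absurd h hG
  have hc := congrArg (PowerSeries.coeff (m + 1)) hmain
  rw [map_sub, PowerSeries.coeff_succ_X_mul] at hc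
  simp only [coeff_mk] at hc
  have hfe : ((m+1).factorial : ℝ) ≠ 0 := Nat.cast_ne_zero.mpr (m+1).factorial_ne_zero
  have hfm : (m.factorial : ℝ) ≠ 0 := Nat.cast_ne_zero.mpr m.factorial_ne_zero
  have hfac : ((m+1).factorial : ℝ) = (m + 1) * m.factorial := by
    push_cast [Nat.factorial_succ]; ring
  field_simp at hc
  push_cast
  refine mul_right_cancel₀ hfm ?_
  linear_combination hc + T c b x m * hfac
end

section
/- Let Y be a real random variable on a probability space such that (Y)_{n,λ} is integrable for every n ≥ 0. Then for every integer n ≥ 0 and every real x, the random variable S^Y_{n,λ}(x+Y) is integrable and E[S^Y_{n,λ}(x+Y)] = (x)_{n,λ}. -/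
open Finset

lemma dff_zero (lam x : ℝ) : dff lam x 0 = 1 := by simp [dff]

lemma dff_succ (lam x : ℝ) (n : ℕ) : dff lam x (n+1) = dff lam x n * (x - n * lam) := by
  simp [dff, Finset.prod_range_succ]

lemma vdm (lam x y : ℝ) (n : ℕ) :
    dff lam (x + y) n
      = ∑ k ∈ range (n+1), (n.choose k : ℝ) * dff lam x k * dff lam y (n - k) := by
  induction n with
  | zero => simp [dff]
  | succ n ih =>
    rw [dff_succ, ih, Finset.sum_mul]
    have hsplit : ∀ k ∈ range (n+1),
        (n.choose k : ℝ) * dff lam x k * dff lam y (n - k) * (x + y - n * lam)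
          = (n.choose k : ℝ) * (dff lam x (k+1) * dff lam y (n - k))
            + (n.choose k : ℝ) * (dff lam x k * dff lam y (n - k + 1)) := by
      intro k hk
      rw [Finset.mem_range] at hk
      have hk' : k ≤ n := Nat.lt_succ_iff.mp hk
      have h1 : x + y - n * lam = (x - k * lam) + (y - (n - k : ℕ) * lam) := by
        have : ((n - k : ℕ) : ℝ) = (n : ℝ) - k := by
          rw [Nat.cast_sub hk']
        rw [this]; ring
      rw [dff_succ, dff_succ, h1]; ring
    rw [Finset.sum_congr rfl hsplit, Finset.sum_add_distrib]
    have e1 : ∑ k ∈ range (n+1), (n.choose k : ℝ) * (dff lam x (k+1) * dff lam y (n - k))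
        = ∑ k ∈ range (n+2), (if k = 0 then 0 else (n.choose (k-1) : ℝ)) * dff lam x k * dff lam y (n + 1 - k) := by
      rw [Finset.sum_range_succ' (fun k => (if k = 0 then 0 else (n.choose (k-1) : ℝ)) * dff lam x k * dff lam y (n + 1 - k))]
      norm_num
      apply Finset.sum_congr rfl
      intro k hk
      rw [Finset.mem_range] at hk
      have : n + 1 - (k + 1) = n - k := by omega
      rw [this]; ring
    have e2 : ∑ k ∈ range (n+1), (n.choose k : ℝ) * (dff lam x k * dff lam y (n - k + 1))
        = ∑ k ∈ range (n+2), (n.choose k : ℝ) * dff lam x k * dff lam y (n + 1 - k) := by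
      rw [Finset.sum_range_succ (fun k => (n.choose k : ℝ) * dff lam x k * dff lam y (n + 1 - k))]
      rw [Nat.choose_eq_zero_of_lt (Nat.lt_succ_self n)]
      simp only [Nat.cast_zero, zero_mul, add_zero]
      apply Finset.sum_congr rfl
      intro k hk
      rw [Finset.mem_range] at hk
      have : n + 1 - k = n - k + 1 := by omega
      rw [this]; ring
    rw [e1, e2, ← Finset.sum_add_distrib]
    apply Finset.sum_congr rfl
    intro k hk
    rcases Nat.eq_zero_or_pos k with h | h
    · subst h; simp
    · rw [if_neg (Nat.pos_iff_ne_zero.mp h)]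
      have : (n+1).choose k = n.choose (k-1) + n.choose k := by
        rcases Nat.exists_eq_add_of_lt h with ⟨j, rfl⟩
        simp [Nat.succ_sub_one, Nat.choose_succ_succ]
      rw [this]; push_cast; ring

open MeasureTheory PowerSeries

theorem stmt9 (lam : ℝ) (hlam : lam ≠ 0)
    {Ω : Type*} [MeasurableSpace Ω] (μ : Measure Ω) [IsProbabilityMeasure μ]
    (Y : Ω → ℝ) (hYm : Measurable Y)
    (hY : ∀ n : ℕ, Integrable (fun ω => dff lam (Y ω) n) μ)
    (S : ℝ → ℕ → ℝ)
    (hS : ∀ x, (PowerSeries.mk fun n => S x n / n.factorial) *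
        (PowerSeries.mk fun n => (∫ ω, dff lam (Y ω) n ∂μ) / n.factorial) = degExp lam x)
    (n : ℕ) (x : ℝ) :
    Integrable (fun ω => S (x + Y ω) n) μ
    ∧ (∫ ω, S (x + Y ω) n ∂μ) = dff lam x n := by
  set m : ℕ → ℝ := fun j => ∫ ω, dff lam (Y ω) j ∂μ with hm
  have hm0 : m 0 = 1 := by
    simp [hm, dff_zero]
  -- Key recurrence for S
  have key : ∀ (N : ℕ) (x' : ℝ), S x' N = dff lam x' N -
      ∑ k ∈ range N, ((N.factorial : ℝ) * ((m (N-k)) / (N-k).factorial / k.factorial)) * S x' k := by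
    intro N x'
    have h := congrArg (PowerSeries.coeff N) (hS x')
    rw [PowerSeries.coeff_mul, Finset.Nat.sum_antidiagonal_eq_sum_range_succ_mk] at h
    simp only [coeff_mk, degExp] at h
    rw [Finset.sum_range_succ] at h
    have hfac : (N.factorial : ℝ) ≠ 0 := Nat.cast_ne_zero.mpr (Nat.factorial_ne_zero N)
    have h' : S x' N / N.factorial
        = dff lam x' N / N.factorial
          - ∑ k ∈ range N, S x' k / k.factorial * (m (N - k) / (N - k).factorial) := by
      rw [eq_sub_iff_add_eq, ← h]
      simp only [hm, Nat.sub_self, dff_zero]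
      simp
      ring
    have := congrArg (fun z => (N.factorial : ℝ) * z) h'
    simp only [mul_sub, Finset.mul_sum, mul_div_cancel₀ _ hfac] at this
    rw [this]
    congr 1
    apply Finset.sum_congr rfl
    intro k _
    ring
  clear hS
  induction n using Nat.strong_induction_on generalizing x with
  | _ n ih =>
    -- integrability and integral of dff lam (x + Y ω) n
    have hrew : (fun ω => dff lam (x + Y ω) n)
        = fun ω => ∑ k ∈ range (n+1), ((n.choose k : ℝ) * dff lam x k) * dff lam (Y ω) (n-k) := by
      funext ω
      rw [vdm]
    have I1 : Integrable (fun ω => dff lam (x + Y ω) n) μ := by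
      rw [hrew]
      exact integrable_finset_sum _ fun k _ => (hY (n-k)).const_mul _
    have E1 : (∫ ω, dff lam (x + Y ω) n ∂μ)
        = ∑ k ∈ range (n+1), ((n.choose k : ℝ) * dff lam x k) * m (n-k) := by
      rw [hrew, integral_finset_sum _ fun k _ => (hY (n-k)).const_mul _]
      exact Finset.sum_congr rfl fun k _ => integral_const_mul _ _
    have hrew2 : (fun ω => S (x + Y ω) n)
        = fun ω => dff lam (x + Y ω) n -
            ∑ k ∈ range n, ((n.factorial : ℝ) * ((m (n-k)) / (n-k).factorial / k.factorial)) * S (x + Y ω) k := by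
      funext ω; exact key n (x + Y ω)
    have I2 : Integrable (fun ω => S (x + Y ω) n) μ := by
      rw [hrew2]
      exact I1.sub (integrable_finset_sum _ fun k hk =>
        ((ih k (Finset.mem_range.mp hk) x).1.const_mul _))
    refine ⟨I2, ?_⟩
    rw [hrew2, integral_sub I1 (integrable_finset_sum _ fun k hk =>
        ((ih k (Finset.mem_range.mp hk) x).1.const_mul _)), E1,
      integral_finset_sum _ fun k hk => ((ih k (Finset.mem_range.mp hk) x).1.const_mul _)]
    have E2 : ∀ k ∈ range n,
        (∫ ω, ((n.factorial : ℝ) * ((m (n-k)) / (n-k).factorial / k.factorial)) * S (x + Y ω) k ∂μ)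
          = ((n.choose k : ℝ) * dff lam x k) * m (n-k) := by
      intro k hk
      rw [integral_const_mul, (ih k (Finset.mem_range.mp hk) x).2,
        Nat.cast_choose ℝ (le_of_lt (Finset.mem_range.mp hk))]
      field_simp
    rw [Finset.sum_congr rfl E2, Finset.sum_range_succ]
    simp [hm0]
end
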